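/- Let f ∈ W₀¹((−1,1)) with f(0) = 1, and let Ẽ be a quadratic form on L²((−1,1)) extending 𝓔 (where 𝓔(g) = ∫|g'|² + g(0)² on W₀¹((−1,1))) with Ẽ(1) = 0 and Ẽ(f − 1) ≤ ∫_{−1}^{1}|f'|² dλ. Then we get the contradiction ∫|f'|² + 1 ≤ ∫|f'|²; hence no such Ẽ exists. -/

import Mathlib

open MeasureTheory ENNReal

/-- `f ∈ W¹((-1,1))` with weak derivative `g`: both are square integrable on
`(-1,1)` and `f` (its continuous representative) is given by the fundamental
theorem of calculus from `g`. -/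
def SobDeriv (f g : ℝ → ℝ) : Prop :=
  MemLp f 2 (volume.restrict (Set.Ioo (-1 : ℝ) 1)) ∧
  MemLp g 2 (volume.restrict (Set.Ioo (-1 : ℝ) 1)) ∧
  ∀ x ∈ Set.Icc (-1 : ℝ) 1, f x = f (-1) + ∫ t in (-1)..x, g t

theorem stmt12 (f g : ℝ → ℝ) (hfg : SobDeriv f g)
    (hbdry : f (-1) = 0 ∧ f 1 = 0) (hf0 : f 0 = 1)
    (Et : (ℝ → ℝ) → ℝ≥0∞)
    -- Ẽ is a quadratic form
    (hhom : ∀ (l : ℝ) (h : ℝ → ℝ), Et (l • h) = ENNReal.ofReal (l ^ 2) * Et h)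
    (hpar : ∀ h k : ℝ → ℝ, Et (h + k) + Et (h - k) = 2 * Et h + 2 * Et k)
    -- Ẽ extends 𝓔 on W₀¹((-1,1))
    (hext : ∀ h k : ℝ → ℝ, SobDeriv h k → h (-1) = 0 → h 1 = 0 →
      Et h = ENNReal.ofReal (∫ t in (-1)..1, (k t) ^ 2) +
        ENNReal.ofReal ((h 0) ^ 2))
    -- Ẽ(1) = 0
    (hone : Et (fun _ => (1 : ℝ)) = 0)
    -- Ẽ(f - 1) ≤ ∫ |f'|²
    (hle : Et (f - fun _ => (1 : ℝ)) ≤ ENNReal.ofReal (∫ t in (-1)..1, (g t) ^ 2)) :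
    False := by
  obtain ⟨hL, hR⟩ := hbdry
  set I : ℝ := ∫ t in (-1)..1, (g t) ^ 2 with hIdef
  have hI0 : 0 ≤ I := intervalIntegral.integral_nonneg (by norm_num) (fun t _ => sq_nonneg _)
  have hEf : Et f = ENNReal.ofReal I + ENNReal.ofReal 1 := by
    rw [hext f g hfg hL hR, hf0]; norm_num; rfl
  -- the sequence F n = Et (f - (1+n))
  set F : ℕ → ℝ≥0∞ := fun n => Et (fun x => f x - (1 + (n : ℝ))) with hFdef
  have hF0 : F 0 = Et (f - fun _ => (1 : ℝ)) := by
    have : (fun x => f x - (1 + ((0 : ℕ) : ℝ))) = (f - fun _ => (1 : ℝ)) := by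
      funext x; simp
    simp only [hFdef, this]
  have hF0le : F 0 ≤ ENNReal.ofReal I := hF0 ▸ hle
  have hF0ne : F 0 ≠ ⊤ := ne_top_of_le_ne_top ofReal_ne_top hF0le
  set a : ℝ := (F 0).toReal with hadef
  have ha0 : 0 ≤ a := ENNReal.toReal_nonneg
  have haI : a ≤ I := by
    have := ENNReal.toReal_mono ofReal_ne_top hF0le
    rwa [ENNReal.toReal_ofReal hI0] at this
  set b : ℝ := I + 1 with hbdef
  have hEfb : Et f = ENNReal.ofReal b := by
    rw [hEf, ← ENNReal.ofReal_add hI0 (by norm_num)]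
  have hEfne : Et f ≠ ⊤ := hEfb ▸ ofReal_ne_top
  -- base relation : Et f + F 1 = 2 * F 0
  have hbase : Et f + F 1 = 2 * F 0 := by
    have h1 : ((fun x => f x - (1 + ((0:ℕ) : ℝ))) + (fun _ => (1:ℝ))) = f := by
      funext x; simp [Pi.add_apply]
    have h2 : ((fun x => f x - (1 + ((0:ℕ) : ℝ))) - (fun _ => (1:ℝ)))
        = (fun x => f x - (1 + ((1:ℕ) : ℝ))) := by
      funext x; simp [Pi.sub_apply]; ring
    have := hpar (fun x => f x - (1 + ((0:ℕ) : ℝ))) (fun _ => (1:ℝ))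
    rw [h1, h2, hone] at this
    simpa [hFdef] using this
  -- recurrence : F n + F (n+2) = 2 * F (n+1)
  have hrec : ∀ n : ℕ, F n + F (n + 2) = 2 * F (n + 1) := by
    intro n
    have h1 : ((fun x => f x - (1 + ((n+1 : ℕ) : ℝ))) + (fun _ => (1:ℝ)))
        = (fun x => f x - (1 + ((n : ℕ) : ℝ))) := by
      funext x; simp [Pi.add_apply]; push_cast; ring
    have h2 : ((fun x => f x - (1 + ((n+1 : ℕ) : ℝ))) - (fun _ => (1:ℝ)))
        = (fun x => f x - (1 + ((n+2 : ℕ) : ℝ))) := by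
      funext x; simp [Pi.sub_apply]; push_cast; ring
    have := hpar (fun x => f x - (1 + ((n+1 : ℕ) : ℝ))) (fun _ => (1:ℝ))
    rw [h1, h2, hone] at this
    simpa [hFdef] using this
  -- exact affine formula
  have key : ∀ n : ℕ, (F n ≠ ⊤ ∧ (F n).toReal = a - (n : ℝ) * (b - a)) ∧
      (F (n+1) ≠ ⊤ ∧ (F (n+1)).toReal = a - ((n : ℝ) + 1) * (b - a)) := by
    intro n
    induction n with
    | zero =>
      have hF1ne : F 1 ≠ ⊤ := by
        intro h
        rw [h, add_top] at hbase
        exact ENNReal.mul_ne_top (by simp) hF0ne hbase.symm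
      have htr : (Et f).toReal + (F 1).toReal = 2 * (F 0).toReal := by
        have := congrArg ENNReal.toReal hbase
        rwa [ENNReal.toReal_add hEfne hF1ne, ENNReal.toReal_mul,
          ENNReal.toReal_ofNat] at this
      have hEftr : (Et f).toReal = b := by rw [hEfb, ENNReal.toReal_ofReal (by positivity)]
      constructor
      · exact ⟨hF0ne, by push_cast; ring_nf; exact hadef.symm⟩
      · refine ⟨hF1ne, ?_⟩
        rw [hEftr] at htr
        push_cast
        linarith
    | succ n ih =>
      obtain ⟨⟨hne0, heq0⟩, ⟨hne1, heq1⟩⟩ := ih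
      refine ⟨⟨hne1, by push_cast; push_cast at heq1; linarith⟩, ?_⟩
      have hr := hrec n
      have hne2 : F (n + 2) ≠ ⊤ := by
        intro h
        rw [h, add_top] at hr
        have : (2 : ℝ≥0∞) * F (n+1) ≠ ⊤ := by
          simp [ENNReal.mul_ne_top, hne1]
        exact this hr.symm
      have htr : (F n).toReal + (F (n+2)).toReal = 2 * (F (n+1)).toReal := by
        have := congrArg ENNReal.toReal hr
        rwa [ENNReal.toReal_add hne0 hne2, ENNReal.toReal_mul,
          ENNReal.toReal_ofNat] at this
      refine ⟨hne2, ?_⟩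
      have h22 : (F (n+2)).toReal = a - ((n:ℝ) + 2) * (b - a) := by
        rw [heq0, heq1] at htr
        linarith
      rw [show n + 1 + 1 = n + 2 from rfl, h22]
      push_cast
      ring
  -- contradiction
  have hd : 1 ≤ b - a := by simp only [hbdef]; linarith
  set n : ℕ := ⌈a⌉₊ + 1 with hndef
  have hna : a + 1 ≤ (n : ℝ) := by
    have := Nat.le_ceil a
    rw [hndef]; push_cast
    linarith
  have hFn := ((key n).1).2
  have hnonneg : (0 : ℝ) ≤ (F n).toReal := ENNReal.toReal_nonneg
  have hnd : (n : ℝ) ≤ (n : ℝ) * (b - a) := by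
    nlinarith [Nat.cast_nonneg (α := ℝ) n]
  linarith
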